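/- For α ∈ (0,1), the function F₂(x) = (x-1)²/(x^(α+1)-1) is monotonically increasing on the interval (1,∞). -/

import Mathlib

open Real Set

private lemma g_hasDeriv (α : ℝ) (x : ℝ) (hx : 0 < x) :
    HasDerivAt (fun x : ℝ => 2 * x ^ (α + 1) - 2 - (α + 1) * ((x - 1) * x ^ α))
      (2 * ((α + 1) * x ^ α) - (α + 1) * (1 * x ^ α + (x - 1) * (α * x ^ (α - 1)))) x := by
  have h1 : HasDerivAt (fun x : ℝ => x ^ (α + 1)) ((α + 1) * x ^ (α + 1 - 1)) x :=
    Real.hasDerivAt_rpow_const (Or.inl hx.ne')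
  have h2 : HasDerivAt (fun x : ℝ => x ^ α) (α * x ^ (α - 1)) x :=
    Real.hasDerivAt_rpow_const (Or.inl hx.ne')
  have h3 : HasDerivAt (fun x : ℝ => x - 1) 1 x := (hasDerivAt_id x).sub_const 1
  have h4 := ((h3.mul h2).const_mul (α + 1))
  have h5 := ((h1.const_mul 2).sub_const 2).sub h4
  simpa [add_sub_cancel_right, Pi.sub_def] using h5

private lemma g_pos (α : ℝ) (hα : α ∈ Set.Ioo (0 : ℝ) 1) (x : ℝ) (hx : 1 < x) :
    0 < 2 * x ^ (α + 1) - 2 - (α + 1) * ((x - 1) * x ^ α) := by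
  obtain ⟨hα0, hα1⟩ := hα
  set g : ℝ → ℝ := fun x => 2 * x ^ (α + 1) - 2 - (α + 1) * ((x - 1) * x ^ α) with hg
  have hmono : StrictMonoOn g (Ici 1) := by
    apply strictMonoOn_of_deriv_pos (convex_Ici 1)
    · apply ContinuousOn.sub
      apply ContinuousOn.sub
      · exact continuousOn_const.mul (continuousOn_id.rpow_const (fun y hy => Or.inl (lt_of_lt_of_le one_pos hy).ne'))
      · exact continuousOn_const
      · exact (continuousOn_const.mul ((continuousOn_id.sub continuousOn_const).mul
          (continuousOn_id.rpow_const (fun y hy => Or.inl (lt_of_lt_of_le one_pos hy).ne'))))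
    · intro y hy
      rw [interior_Ici] at hy
      have hy0 : 0 < y := lt_trans one_pos hy
      rw [(g_hasDeriv α y hy0).deriv]
      have hpow : y ^ α = y * y ^ (α - 1) := by
        rw [← Real.rpow_one_add' hy0.le (by nlinarith : 1 + (α - 1) ≠ 0)]
        ring_nf
      have hp1 : (0:ℝ) < y ^ (α - 1) := Real.rpow_pos_of_pos hy0 _
      have hp2 : (0:ℝ) < y ^ α := Real.rpow_pos_of_pos hy0 _
      nlinarith [mul_pos hp1 (show (0:ℝ) < (1 - α) * y + α by nlinarith)]
  have h0 : g 1 = 0 := by simp [hg, Real.one_rpow]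
  have := hmono (self_mem_Ici) (le_of_lt hx : (1:ℝ) ≤ x) hx
  rw [h0] at this
  exact this

theorem F2_monotone (α : ℝ) (hα : α ∈ Set.Ioo (0 : ℝ) 1) :
    MonotoneOn (fun x : ℝ => (x - 1) ^ 2 / (x ^ (α + 1) - 1)) (Set.Ioi (1 : ℝ)) := by
  obtain ⟨hα0, hα1⟩ := hα
  have hden : ∀ x : ℝ, x ∈ Ioi (1:ℝ) → 0 < x ^ (α + 1) - 1 := by
    intro x hx
    have : (1:ℝ) < x ^ (α + 1) :=
      Real.one_lt_rpow_iff_of_pos (lt_trans one_pos hx) |>.mpr (Or.inl ⟨hx, by linarith⟩)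
    linarith
  apply StrictMonoOn.monotoneOn
  apply strictMonoOn_of_deriv_pos (convex_Ioi 1)
  · apply ContinuousOn.div
    · exact ((continuousOn_id.sub continuousOn_const).pow 2)
    · exact (continuousOn_id.rpow_const (fun y hy => Or.inl
        (lt_trans one_pos hy).ne')).sub continuousOn_const
    · intro x hx; exact (hden x hx).ne'
  · intro x hx
    rw [interior_Ioi] at hx
    have hx0 : 0 < x := lt_trans one_pos hx
    have hd0 : x ^ (α + 1) - 1 ≠ 0 := (hden x hx).ne'
    have hn : HasDerivAt (fun x : ℝ => (x - 1) ^ 2) (2 * (x - 1)) x := by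
      have := ((hasDerivAt_id x).sub_const 1).pow 2
      simpa [Pi.pow_def] using this
    have hd : HasDerivAt (fun x : ℝ => x ^ (α + 1) - 1) ((α + 1) * x ^ α) x := by
      have := (Real.hasDerivAt_rpow_const (p := α + 1) (Or.inl hx0.ne')).sub_const 1
      simpa [add_sub_cancel_right] using this
    rw [show (fun x : ℝ => (x - 1) ^ 2 / (x ^ (α + 1) - 1)) = ((fun x : ℝ => (x - 1) ^ 2) / fun x => x ^ (α + 1) - 1) from rfl, (hn.div hd hd0).deriv]
    apply div_pos
    · have hg := g_pos α ⟨hα0, hα1⟩ x hx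
      have : 2 * (x - 1) * (x ^ (α + 1) - 1) - (x - 1) ^ 2 * ((α + 1) * x ^ α)
          = (x - 1) * (2 * x ^ (α + 1) - 2 - (α + 1) * ((x - 1) * x ^ α)) := by ring
      rw [this]
      exact mul_pos (by have := Set.mem_Ioi.mp hx; linarith) hg
    · positivity
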